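/- arXiv:1107.1561 — 2 statements merged into one kernel-verified Lean document; each statement's English description precedes it below -/
import Mathlib

section
/- Let D be a real m×n matrix. Then the minimum of ‖Z‖_* over all real n×n matrices Z satisfying D = DZ equals rank(D), and it is attained uniquely at Z = SIM(D). -/
open Matrix

/-- The nuclear norm of a real matrix: the sum of its singular values
(the square roots of the eigenvalues of `Aᵀ * A`). -/
noncomputable def nuclearNorm {m n : Type*} [Fintype m] [Fintype n] [DecidableEq n]
    (A : Matrix m n ℝ) : ℝ :=
  ∑ i, Real.sqrt ((show (Aᵀ * A).IsHermitian by
    simpa [Matrix.conjTranspose_eq_transpose_of_trivial] using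
      Matrix.isHermitian_conjTranspose_mul_self A).eigenvalues i)

/-- The shape interaction matrix of a real `m × n` matrix `X`: the `n × n`
orthogonal projection matrix onto the row space of `X`. -/
noncomputable def SIM {m n : ℕ} (X : Matrix (Fin m) (Fin n) ℝ) :
    Matrix (Fin n) (Fin n) ℝ :=
  let U : Submodule ℝ (EuclideanSpace ℝ (Fin n)) :=
    Submodule.span ℝ (Set.range fun i => (WithLp.toLp 2 (X i) : EuclideanSpace ℝ (Fin n)))
  LinearMap.toMatrix'
    ((WithLp.linearEquiv 2 ℝ (Fin n → ℝ)).toLinearMap ∘ₗ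
      ((U.subtypeL.comp U.orthogonalProjectionOnto).toLinearMap :
        EuclideanSpace ℝ (Fin n) →ₗ[ℝ] EuclideanSpace ℝ (Fin n)) ∘ₗ
      (WithLp.linearEquiv 2 ℝ (Fin n → ℝ)).symm.toLinearMap :
      (Fin n → ℝ) →ₗ[ℝ] (Fin n → ℝ))

namespace SIMAux

open scoped RealInnerProductSpace

variable {m n : ℕ}

noncomputable def rowSpan (D : Matrix (Fin m) (Fin n) ℝ) : Submodule ℝ (EuclideanSpace ℝ (Fin n)) :=
  Submodule.span ℝ (Set.range fun i => (WithLp.toLp 2 (D i) : EuclideanSpace ℝ (Fin n)))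

lemma inner_eq_dot (x y : EuclideanSpace ℝ (Fin n)) :
    ⟪x, y⟫ = (x : Fin n → ℝ) ⬝ᵥ (y : Fin n → ℝ) := by
  simp [PiLp.inner_apply, dotProduct, RCLike.inner_apply, starRingEnd_apply, mul_comm]

lemma SIM_mulVec (D : Matrix (Fin m) (Fin n) ℝ) (x : EuclideanSpace ℝ (Fin n)) :
    WithLp.toLp 2 (SIM D *ᵥ x) = ((rowSpan D).orthogonalProjectionOnto x : EuclideanSpace ℝ (Fin n)) := by
  have h : SIM D = LinearMap.toMatrix'
      ((WithLp.linearEquiv 2 ℝ (Fin n → ℝ)).toLinearMap ∘ₗ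
      (((rowSpan D).subtypeL.comp (rowSpan D).orthogonalProjectionOnto).toLinearMap :
        EuclideanSpace ℝ (Fin n) →ₗ[ℝ] EuclideanSpace ℝ (Fin n)) ∘ₗ
      (WithLp.linearEquiv 2 ℝ (Fin n → ℝ)).symm.toLinearMap :
      (Fin n → ℝ) →ₗ[ℝ] (Fin n → ℝ)) := rfl
  rw [h, ← Matrix.toLin'_apply, Matrix.toLin'_toMatrix']
  rfl

lemma ext_mulVec {A B : Matrix (Fin n) (Fin n) ℝ} (h : ∀ x : Fin n → ℝ, A *ᵥ x = B *ᵥ x) :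
    A = B := by
  ext i j
  have := congrFun (h (Pi.single j 1)) i
  simpa [Matrix.mulVec_single] using this

lemma SIM_mulVec_mem (D : Matrix (Fin m) (Fin n) ℝ) {x : EuclideanSpace ℝ (Fin n)}
    (hx : x ∈ rowSpan D) : SIM D *ᵥ x = x := by
  have h := SIM_mulVec D x
  rw [← Submodule.starProjection_apply, Submodule.starProjection_eq_self_iff.mpr hx] at h
  exact congrArg WithLp.ofLp h

lemma SIM_mulVec_mem' (D : Matrix (Fin m) (Fin n) ℝ) (x : EuclideanSpace ℝ (Fin n)) :
    SIM D *ᵥ (SIM D *ᵥ x) = SIM D *ᵥ x := by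
  have h := SIM_mulVec D x
  exact SIM_mulVec_mem D (x := WithLp.toLp 2 (SIM D *ᵥ x)) (by rw [h]; exact Submodule.coe_mem _)

lemma SIM_idem (D : Matrix (Fin m) (Fin n) ℝ) : SIM D * SIM D = SIM D := by
  apply ext_mulVec
  intro x
  rw [← Matrix.mulVec_mulVec]
  exact SIM_mulVec_mem' D (WithLp.toLp 2 x)

lemma SIM_transpose (D : Matrix (Fin m) (Fin n) ℝ) : (SIM D)ᵀ = SIM D := by
  apply ext_mulVec
  intro x
  funext j
  have h1 : ((SIM D)ᵀ *ᵥ x) j = (SIM D *ᵥ Pi.single j 1) ⬝ᵥ x := by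
    simp [Matrix.mulVec_single, Matrix.mulVec, dotProduct, Matrix.transpose_apply,
      Pi.single_apply, mul_ite, mul_one, mul_zero, mul_comm]
  have h2 : (SIM D *ᵥ x) j = Pi.single j (1:ℝ) ⬝ᵥ (SIM D *ᵥ x) := by
    simp [single_dotProduct]
  rw [h1, h2, ← inner_eq_dot, ← inner_eq_dot, SIM_mulVec, SIM_mulVec,
    ← Submodule.starProjection_apply, ← Submodule.starProjection_apply,
    Submodule.inner_starProjection_left_eq_right]

lemma onb_matrix_mul_transpose (b : OrthonormalBasis (Fin n) ℝ (EuclideanSpace ℝ (Fin n))) :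
    (Matrix.of fun i j => b i j) * (Matrix.of fun i j => b i j)ᵀ = 1 := by
  ext i j
  have h := (orthonormal_iff_ite.mp b.orthonormal) i j
  rw [inner_eq_dot] at h
  simpa [Matrix.mul_apply, dotProduct, Matrix.one_apply] using h

lemma trace_eq_sum_dot (A : Matrix (Fin n) (Fin n) ℝ)
    (b : OrthonormalBasis (Fin n) ℝ (EuclideanSpace ℝ (Fin n))) :
    A.trace = ∑ i, (b i : Fin n → ℝ) ⬝ᵥ (A *ᵥ (b i : Fin n → ℝ)) := by
  set B : Matrix (Fin n) (Fin n) ℝ := Matrix.of fun i j => b i j with hBdef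
  have hB : B * Bᵀ = 1 := onb_matrix_mul_transpose b
  have hB2 : Bᵀ * B = 1 := mul_eq_one_comm.mp hB
  have h1 : A.trace = (B * A * Bᵀ).trace := by
    rw [Matrix.trace_mul_cycle, hB2, Matrix.one_mul]
  rw [h1]
  unfold Matrix.trace
  apply Finset.sum_congr rfl
  intro i _
  show ∑ k, (B * A) i k * Bᵀ k i = _
  have : ∀ k, (B * A) i k * Bᵀ k i = ∑ j, B i j * (A j k * B i k) := by
    intro k
    simp [Matrix.mul_apply, Finset.sum_mul, mul_assoc]
  simp only [this]
  rw [Finset.sum_comm]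
  simp [Matrix.mulVec, dotProduct, Finset.mul_sum, hBdef]

lemma trace_SIM (D : Matrix (Fin m) (Fin n) ℝ) :
    (SIM D).trace = (Module.finrank ℝ (rowSpan D) : ℝ) := by
  have h1 : (SIM D).trace = LinearMap.trace ℝ (Fin n → ℝ)
      ((WithLp.linearEquiv 2 ℝ (Fin n → ℝ)).toLinearMap ∘ₗ
      (((rowSpan D).subtypeL.comp (rowSpan D).orthogonalProjectionOnto).toLinearMap :
        EuclideanSpace ℝ (Fin n) →ₗ[ℝ] EuclideanSpace ℝ (Fin n)) ∘ₗ
      (WithLp.linearEquiv 2 ℝ (Fin n → ℝ)).symm.toLinearMap :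
      (Fin n → ℝ) →ₗ[ℝ] (Fin n → ℝ)) := by
    rw [LinearMap.trace_eq_matrix_trace ℝ (Pi.basisFun ℝ (Fin n)), LinearMap.toMatrix_eq_toMatrix']
    rfl
  rw [h1]
  have h2 : LinearMap.trace ℝ (EuclideanSpace ℝ (Fin n))
      (((rowSpan D).subtype ∘ₗ (((rowSpan D).orthogonalProjectionOnto).toLinearMap))) =
      (Module.finrank ℝ (rowSpan D) : ℝ) := by
    rw [LinearMap.trace_comp_comm']
    have : (((rowSpan D).orthogonalProjectionOnto).toLinearMap ∘ₗ (rowSpan D).subtype) =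
        LinearMap.id := by
      ext u
      simp [Submodule.orthogonalProjectionOnto_mem_subspace_eq_self]
    rw [this, LinearMap.trace_id]
  rw [← LinearMap.trace_conj' _ (WithLp.linearEquiv 2 ℝ (Fin n → ℝ))] at h2
  exact h2

lemma rank_eq_finrank_rowSpan (D : Matrix (Fin m) (Fin n) ℝ) :
    D.rank = Module.finrank ℝ (rowSpan D) := by
  rw [Matrix.rank_eq_finrank_span_row]
  have : rowSpan D = (Submodule.span ℝ (Set.range D.row)).map
      (WithLp.linearEquiv 2 ℝ (Fin n → ℝ)).symm.toLinearMap := by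
    rw [Submodule.map_span, ← Set.range_comp]; rfl
  rw [this, LinearEquiv.finrank_map_eq]

lemma dot_transpose_mulVec (A : Matrix (Fin n) (Fin n) ℝ) (x y : Fin n → ℝ) :
    (Aᵀ *ᵥ x) ⬝ᵥ y = x ⬝ᵥ (A *ᵥ y) := by
  rw [Matrix.mulVec_transpose, ← Matrix.dotProduct_mulVec]

def toE {n : ℕ} (x : Fin n → ℝ) : EuclideanSpace ℝ (Fin n) := WithLp.toLp 2 x

lemma norm_toE_le_of_SIM (D : Matrix (Fin m) (Fin n) ℝ) (x : EuclideanSpace ℝ (Fin n)) :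
    ‖toE (SIM D *ᵥ x)‖ ≤ ‖x‖ := by
  have h : toE (SIM D *ᵥ x) = ((rowSpan D).orthogonalProjectionOnto x : EuclideanSpace ℝ (Fin n)) :=
    SIM_mulVec D x
  rw [h, ← Submodule.coe_norm]
  calc ‖(rowSpan D).orthogonalProjectionOnto x‖
      ≤ ‖(rowSpan D).orthogonalProjectionOnto‖ * ‖x‖ :=
        ((rowSpan D).orthogonalProjectionOnto).le_opNorm x
    _ ≤ 1 * ‖x‖ := by
        apply mul_le_mul_of_nonneg_right (Submodule.orthogonalProjectionOnto_norm_le _) (norm_nonneg _)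
    _ = ‖x‖ := one_mul _

lemma key (D : Matrix (Fin m) (Fin n) ℝ) (Z : Matrix (Fin n) (Fin n) ℝ) (hZ : D = D * Z) :
    (D.rank : ℝ) ≤ nuclearNorm Z ∧ (nuclearNorm Z = (D.rank : ℝ) → Z = SIM D) := by
  classical
  -- fixed vectors of Zᵀ
  have hfix : ∀ u ∈ rowSpan D, Zᵀ *ᵥ u = u := by
    intro u hu
    induction hu using Submodule.span_induction with
    | mem x hx =>
        obtain ⟨i, rfl⟩ := hx
        funext j
        have h := congrFun (congrFun hZ i) j
        simpa [Matrix.mul_apply, Matrix.mulVec, dotProduct, Matrix.transpose_apply,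
          mul_comm] using h.symm
    | zero => simp
    | add x y hx hy ihx ihy => rw [WithLp.ofLp_add, Matrix.mulVec_add, ihx, ihy]
    | smul a x hx ih => rw [WithLp.ofLp_smul, Matrix.mulVec_smul, ih]
  have hmemP : ∀ x : Fin n → ℝ, toE (SIM D *ᵥ x) ∈ rowSpan D := by
    intro x
    rw [show toE (SIM D *ᵥ x) = _ from SIM_mulVec D (WithLp.toLp 2 x)]
    exact Submodule.coe_mem _
  have hfixP : Zᵀ * SIM D = SIM D := by
    apply ext_mulVec
    intro x
    rw [← Matrix.mulVec_mulVec]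
    exact hfix _ (hmemP x)
  -- eigendecomposition of ZᵀZ
  have hZH : Zᴴ = Zᵀ := Matrix.conjTranspose_eq_transpose_of_trivial Z
  have hH := Matrix.isHermitian_conjTranspose_mul_self Z
  set lam : Fin n → ℝ := hH.eigenvalues with hlam
  set v : Fin n → EuclideanSpace ℝ (Fin n) := fun i => hH.eigenvectorBasis i with hv
  have hlnn : ∀ i, 0 ≤ lam i := fun i =>
    (Matrix.posSemidef_conjTranspose_mul_self Z).eigenvalues_nonneg i
  have heig : ∀ i, (Zᵀ * Z) *ᵥ (v i : Fin n → ℝ) = lam i • (v i : Fin n → ℝ) := by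
    intro i
    rw [← hZH]
    exact hH.mulVec_eigenvectorBasis i
  have hvnorm : ∀ i, (v i : Fin n → ℝ) ⬝ᵥ (v i : Fin n → ℝ) = 1 := by
    intro i
    have h := (orthonormal_iff_ite.mp hH.eigenvectorBasis.orthonormal) i i
    rw [inner_eq_dot] at h
    simpa [hv] using h
  have hZvZv : ∀ i, (Z *ᵥ (v i : Fin n → ℝ)) ⬝ᵥ (Z *ᵥ (v i : Fin n → ℝ)) = lam i := by
    intro i
    have h1 : (Z *ᵥ (v i : Fin n → ℝ)) ⬝ᵥ (Z *ᵥ (v i : Fin n → ℝ))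
        = (v i : Fin n → ℝ) ⬝ᵥ ((Zᵀ * Z) *ᵥ (v i : Fin n → ℝ)) := by
      rw [← Matrix.mulVec_mulVec, ← dot_transpose_mulVec Zᵀ, Matrix.transpose_transpose]
    rw [h1, heig i, dotProduct_smul, smul_eq_mul, hvnorm i, mul_one]
  set t : Fin n → ℝ := fun i => (Z *ᵥ (v i : Fin n → ℝ)) ⬝ᵥ (SIM D *ᵥ (v i : Fin n → ℝ))
    with ht
  -- the trace identity
  have htrace : ∑ i, t i = (D.rank : ℝ) := by
    have h1 : (Zᵀ * SIM D).trace = ∑ i, t i := by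
      rw [trace_eq_sum_dot (Zᵀ * SIM D) hH.eigenvectorBasis]
      apply Finset.sum_congr rfl
      intro i _
      rw [← Matrix.mulVec_mulVec, ← dot_transpose_mulVec Zᵀ, Matrix.transpose_transpose]
    rw [hfixP, trace_SIM, ← rank_eq_finrank_rowSpan] at h1
    exact h1.symm
  have hdot_inner : ∀ x y : Fin n → ℝ, x ⬝ᵥ y = ⟪toE x, toE y⟫ := by
    intro x y
    rw [inner_eq_dot]
    rfl
  have hnormZv : ∀ i, ‖toE (Z *ᵥ (v i : Fin n → ℝ))‖ = Real.sqrt (lam i) := by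
    intro i
    have h1 : ⟪toE (Z *ᵥ (v i : Fin n → ℝ)), toE (Z *ᵥ (v i : Fin n → ℝ))⟫ = lam i := by
      rw [← hdot_inner]; exact hZvZv i
    rw [real_inner_self_eq_norm_mul_norm] at h1
    rw [← h1, Real.sqrt_mul_self (norm_nonneg _)]
  have hnormv : ∀ i, ‖v i‖ = 1 := fun i => hH.eigenvectorBasis.orthonormal.1 i
  have hPle : ∀ i, ‖toE (SIM D *ᵥ (v i : Fin n → ℝ))‖ ≤ 1 := by
    intro i
    calc ‖toE (SIM D *ᵥ (v i : Fin n → ℝ))‖ ≤ ‖v i‖ := norm_toE_le_of_SIM D (v i)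
      _ = 1 := hnormv i
  have ht_le : ∀ i, t i ≤ Real.sqrt (lam i) := by
    intro i
    have h1 : t i ≤ ‖toE (Z *ᵥ (v i : Fin n → ℝ))‖ * ‖toE (SIM D *ᵥ (v i : Fin n → ℝ))‖ := by
      rw [ht]
      show (Z *ᵥ (v i : Fin n → ℝ)) ⬝ᵥ (SIM D *ᵥ (v i : Fin n → ℝ)) ≤ _
      rw [hdot_inner]
      exact real_inner_le_norm _ _
    calc t i ≤ _ := h1
      _ ≤ Real.sqrt (lam i) * 1 := by
          apply mul_le_mul (le_of_eq (hnormZv i)) (hPle i) (norm_nonneg _) (Real.sqrt_nonneg _)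
      _ = Real.sqrt (lam i) := mul_one _
  have hnn_eq : nuclearNorm Z = ∑ i, Real.sqrt (lam i) := rfl
  have hlower : (D.rank : ℝ) ≤ nuclearNorm Z := by
    rw [hnn_eq, ← htrace]
    exact Finset.sum_le_sum fun i _ => ht_le i
  refine ⟨hlower, ?_⟩
  -- equality case
  intro heq
  have hall : ∀ i, t i = Real.sqrt (lam i) := by
    have hsum : ∑ i, (Real.sqrt (lam i) - t i) = 0 := by
      rw [Finset.sum_sub_distrib, htrace, ← hnn_eq, heq, sub_self]
    intro i
    have h0 := (Finset.sum_eq_zero_iff_of_nonneg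
      (fun i _ => sub_nonneg.mpr (ht_le i))).mp hsum i (Finset.mem_univ i)
    linarith
  have hkey : ∀ i, Z *ᵥ (v i : Fin n → ℝ) = SIM D *ᵥ (v i : Fin n → ℝ) := by
    intro i
    rcases (hlnn i).lt_or_eq with hpos | hzero
    · -- positive eigenvalue
      have hs : 0 < Real.sqrt (lam i) := Real.sqrt_pos.mpr hpos
      have hP1 : ‖toE (SIM D *ᵥ (v i : Fin n → ℝ))‖ = 1 := by
        have h1 : t i ≤ Real.sqrt (lam i) * ‖toE (SIM D *ᵥ (v i : Fin n → ℝ))‖ := by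
          rw [← hnormZv i]
          show (Z *ᵥ (v i : Fin n → ℝ)) ⬝ᵥ (SIM D *ᵥ (v i : Fin n → ℝ)) ≤ _
          rw [hdot_inner]
          exact real_inner_le_norm _ _
        rw [hall i] at h1
        have h2 : 1 ≤ ‖toE (SIM D *ᵥ (v i : Fin n → ℝ))‖ := by
          nlinarith [hPle i]
        linarith [hPle i]
      -- v i is in the row span
      have hvP : toE (SIM D *ᵥ (v i : Fin n → ℝ)) = v i := by
        have hpyth := Submodule.norm_sq_eq_add_norm_sq_projection (v i) (rowSpan D)
        have hcoe : ‖(rowSpan D).orthogonalProjectionOnto (v i)‖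
            = ‖toE (SIM D *ᵥ (v i : Fin n → ℝ))‖ := by
          have h : toE (SIM D *ᵥ (v i : Fin n → ℝ))
              = ((rowSpan D).orthogonalProjectionOnto (v i) : EuclideanSpace ℝ (Fin n)) :=
            SIM_mulVec D (v i)
          rw [h, ← Submodule.coe_norm]
        rw [hnormv i, hcoe, hP1] at hpyth
        have hzero' : ‖(rowSpan D)ᗮ.orthogonalProjectionOnto (v i)‖ = 0 := by nlinarith
        have hz2 : ((rowSpan D)ᗮ.orthogonalProjectionOnto (v i) : EuclideanSpace ℝ (Fin n)) = 0 := by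
          rw [Submodule.coe_norm] at hzero'
          exact norm_eq_zero.mp hzero'
        have hdecomp := Submodule.starProjection_add_starProjection_orthogonal (K := rowSpan D) (v i)
        rw [Submodule.starProjection_apply, Submodule.starProjection_apply, hz2, add_zero] at hdecomp
        have h : toE (SIM D *ᵥ (v i : Fin n → ℝ))
            = ((rowSpan D).orthogonalProjectionOnto (v i) : EuclideanSpace ℝ (Fin n)) :=
          SIM_mulVec D (v i)
        rw [h]
        exact hdecomp
      have hvmem : (v i : EuclideanSpace ℝ (Fin n)) ∈ rowSpan D := by
        rw [← hvP]
        exact hmemP (v i)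
      -- Cauchy-Schwarz equality
      have hCSeq : ⟪toE (Z *ᵥ (v i : Fin n → ℝ)), v i⟫
          = ‖toE (Z *ᵥ (v i : Fin n → ℝ))‖ * ‖v i‖ := by
        have h1 : ⟪toE (Z *ᵥ (v i : Fin n → ℝ)), v i⟫ = t i := by
          have h0 := hdot_inner (Z *ᵥ (v i : Fin n → ℝ)) (SIM D *ᵥ (v i : Fin n → ℝ))
          rw [hvP] at h0
          exact h0.symm
        rw [h1, hall i, hnormZv i, hnormv i, mul_one]
      have hcs := inner_eq_norm_mul_iff_real.mp hCSeq
      rw [hnormv i, hnormZv i, one_smul] at hcs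
      -- hcs : toE (Z *ᵥ v i) = sqrt (lam i) • v i
      have hone : (v i : Fin n → ℝ) ⬝ᵥ (Z *ᵥ (v i : Fin n → ℝ)) = 1 := by
        rw [Matrix.dotProduct_mulVec, ← Matrix.mulVec_transpose, hfix _ hvmem, hvnorm i]
      have hcs' : Z *ᵥ (v i : Fin n → ℝ) = Real.sqrt (lam i) • (v i : Fin n → ℝ) :=
        congrArg WithLp.ofLp hcs
      have hone2 : (v i : Fin n → ℝ) ⬝ᵥ (Z *ᵥ (v i : Fin n → ℝ)) = Real.sqrt (lam i) := by
        rw [hcs', dotProduct_smul, smul_eq_mul, hvnorm i, mul_one]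
      have hsq1 : Real.sqrt (lam i) = 1 := by rw [← hone2, hone]
      have hfin : Z *ᵥ (v i : Fin n → ℝ) = (v i : Fin n → ℝ) := by
        rw [hcs', hsq1, one_smul]
      rw [hfin]
      exact (congrArg WithLp.ofLp hvP).symm
    · -- zero eigenvalue
      have hz : Z *ᵥ (v i : Fin n → ℝ) = 0 := by
        have h1 : ⟪toE (Z *ᵥ (v i : Fin n → ℝ)), toE (Z *ᵥ (v i : Fin n → ℝ))⟫ = 0 := by
          rw [← hdot_inner, hZvZv i, ← hzero]
        have h2 : toE (Z *ᵥ (v i : Fin n → ℝ)) = 0 := inner_self_eq_zero.mp h1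
        exact congrArg WithLp.ofLp h2
      have hperp : (v i : EuclideanSpace ℝ (Fin n)) ∈ (rowSpan D)ᗮ := by
        rw [Submodule.mem_orthogonal]
        intro u hu
        have : ⟪u, v i⟫ = (u : Fin n → ℝ) ⬝ᵥ (v i : Fin n → ℝ) := inner_eq_dot u (v i)
        rw [this, ← hfix u hu, dot_transpose_mulVec, hz, dotProduct_zero]
      have hP0 : SIM D *ᵥ (v i : Fin n → ℝ) = 0 := by
        have h : toE (SIM D *ᵥ (v i : Fin n → ℝ))
            = ((rowSpan D).orthogonalProjectionOnto (v i) : EuclideanSpace ℝ (Fin n)) :=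
          SIM_mulVec D (v i)
        rw [Submodule.orthogonalProjectionOnto_apply_of_mem_orthogonal (K := rowSpan D) hperp,
          Submodule.coe_zero] at h
        exact congrArg WithLp.ofLp h
      rw [hz, hP0]
  -- conclude Z = SIM D
  have hlin : Matrix.toLin' Z = Matrix.toLin' (SIM D) := by
    apply Module.Basis.ext (hH.eigenvectorBasis.toBasis.map (WithLp.linearEquiv 2 ℝ (Fin n → ℝ)))
    intro i
    rw [Module.Basis.map_apply, OrthonormalBasis.coe_toBasis]
    exact hkey i
  exact Matrix.toLin'.injective hlin

lemma nuclearNorm_SIM (D : Matrix (Fin m) (Fin n) ℝ) :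
    nuclearNorm (SIM D) = (D.rank : ℝ) := by
  classical
  have hM : (SIM D)ᴴ * SIM D = SIM D := by
    rw [Matrix.conjTranspose_eq_transpose_of_trivial, SIM_transpose, SIM_idem]
  have hH := Matrix.isHermitian_conjTranspose_mul_self (SIM D)
  set lam := hH.eigenvalues with hlam
  set v : Fin n → EuclideanSpace ℝ (Fin n) := fun i => hH.eigenvectorBasis i with hv
  have hvnorm : ∀ i, (v i : Fin n → ℝ) ⬝ᵥ (v i : Fin n → ℝ) = 1 := by
    intro i
    have h := (orthonormal_iff_ite.mp hH.eigenvectorBasis.orthonormal) i i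
    rw [inner_eq_dot] at h
    simpa [hv] using h
  have heig : ∀ i, SIM D *ᵥ (v i : Fin n → ℝ) = lam i • (v i : Fin n → ℝ) := by
    intro i
    rw [← hM]
    exact hH.mulVec_eigenvectorBasis i
  have hsq : ∀ i, lam i * lam i = lam i := by
    intro i
    have h1 := heig i
    have h2 : SIM D *ᵥ (SIM D *ᵥ (v i : Fin n → ℝ)) = SIM D *ᵥ (v i : Fin n → ℝ) :=
      SIM_mulVec_mem' D (v i)
    rw [h1, Matrix.mulVec_smul, h1, smul_smul] at h2
    have e1 : (v i : Fin n → ℝ) ⬝ᵥ ((lam i * lam i) • (v i : Fin n → ℝ)) = lam i * lam i := by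
      rw [dotProduct_smul, smul_eq_mul, hvnorm i, mul_one]
    have e2 : (v i : Fin n → ℝ) ⬝ᵥ (lam i • (v i : Fin n → ℝ)) = lam i := by
      rw [dotProduct_smul, smul_eq_mul, hvnorm i, mul_one]
    exact e1.symm.trans ((congrArg (fun w => (v i : Fin n → ℝ) ⬝ᵥ w) h2).trans e2)
  have hsqrt : ∀ i, Real.sqrt (lam i) = lam i := by
    intro i
    have h01 : lam i = 0 ∨ lam i = 1 := by
      have h0 : lam i * (lam i - 1) = 0 := by
        have h := hsq i
        ring_nf
        ring_nf at h
        linarith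
      rcases mul_eq_zero.mp h0 with h | h
      · exact Or.inl h
      · right; linarith
    rcases h01 with h | h <;> simp [h]
  have htr : (SIM D).trace = ∑ i, lam i := by
    rw [trace_eq_sum_dot (SIM D) hH.eigenvectorBasis]
    apply Finset.sum_congr rfl
    intro i _
    show (v i : Fin n → ℝ) ⬝ᵥ (SIM D *ᵥ (v i : Fin n → ℝ)) = lam i
    rw [heig i, dotProduct_smul, smul_eq_mul, hvnorm i, mul_one]
  have hnn : nuclearNorm (SIM D) = ∑ i, Real.sqrt (lam i) := rfl
  calc nuclearNorm (SIM D) = ∑ i, Real.sqrt (lam i) := hnn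
    _ = ∑ i, lam i := Finset.sum_congr rfl fun i _ => hsqrt i
    _ = (SIM D).trace := htr.symm
    _ = (Module.finrank ℝ (rowSpan D) : ℝ) := trace_SIM D
    _ = (D.rank : ℝ) := by rw [rank_eq_finrank_rowSpan]

lemma D_eq_D_mul_SIM (D : Matrix (Fin m) (Fin n) ℝ) : D = D * SIM D := by
  have hrow : ∀ i, SIM D *ᵥ (D i) = D i := fun i =>
    SIM_mulVec_mem D (x := WithLp.toLp 2 (D i)) (Submodule.subset_span (Set.mem_range_self i))
  ext i j
  have h1 : (D * SIM D) i j = ((SIM D)ᵀ *ᵥ D i) j := by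
    simp [Matrix.mul_apply, Matrix.mulVec, dotProduct, Matrix.transpose_apply, mul_comm]
  rw [h1, SIM_transpose, hrow i]

end SIMAux

/-- For a real `m × n` matrix `D`, the minimum of the nuclear norm over all `n × n`
matrices `Z` with `D = D * Z` equals `rank D`, and it is attained uniquely at
`Z = SIM D`. -/
theorem nuclearNorm_min_eq_rank_attained_at_sim {m n : ℕ}
    (D : Matrix (Fin m) (Fin n) ℝ) :
    D = D * SIM D ∧
    nuclearNorm (SIM D) = (D.rank : ℝ) ∧
    (∀ Z : Matrix (Fin n) (Fin n) ℝ, D = D * Z → (D.rank : ℝ) ≤ nuclearNorm Z) ∧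
    (∀ Z : Matrix (Fin n) (Fin n) ℝ, D = D * Z → nuclearNorm Z = (D.rank : ℝ) →
      Z = SIM D) := by
  exact ⟨SIMAux.D_eq_D_mul_SIM D, SIMAux.nuclearNorm_SIM D,
    fun Z hZ => (SIMAux.key D Z hZ).1, fun Z hZ hn => (SIMAux.key D Z hZ).2 hn⟩
end

section
/- Let X be a real m×n matrix and λ > 0. Then the infimum of ‖Z‖_* + λ‖E‖_{2,1} over all triples (Z, D, E) of real matrices (Z of size n×n, D and E of size m×n) satisfying D = DZ and X = D + E equals the infimum of rank(D) + λ‖E‖_{2,1} over all pairs (D, E) of real m×n matrices satisfying X = D + E; moreover, for any feasible (D, E) of the second problem, the triple (SIM(D), D, E) is feasible for the first problem and achieves objective value rank(D) + λ‖E‖_{2,1}. -/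
open Matrix

/-- The `(2,1)`-norm of a real matrix: the sum of the Euclidean norms of its columns. -/
noncomputable def norm21 {m n : Type*} [Fintype m] [Fintype n] (E : Matrix m n ℝ) : ℝ :=
  ∑ j, Real.sqrt (∑ i, (E i j) ^ 2)

/-! ### Auxiliary definitions and lemmas -/

/-- The identity map from plain functions to Euclidean space (used to pin down
instance elaboration). -/
def toE {n : ℕ} (v : Fin n → ℝ) : EuclideanSpace ℝ (Fin n) := WithLp.toLp 2 v

/-- The row space of a matrix, as a submodule of Euclidean space. -/
def rowSpace {m n : ℕ} (D : Matrix (Fin m) (Fin n) ℝ) : Submodule ℝ (EuclideanSpace ℝ (Fin n)) :=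
  Submodule.span ℝ (Set.range fun i => (WithLp.toLp 2 (D i) : EuclideanSpace ℝ (Fin n)))

lemma herm_tm {m n : Type*} [Fintype m] [Fintype n] [DecidableEq n]
    (A : Matrix m n ℝ) : (Aᵀ * A).IsHermitian := by
  simpa [Matrix.conjTranspose_eq_transpose_of_trivial] using
    Matrix.isHermitian_conjTranspose_mul_self A

/-- Summing `⟪proj_U (b i), b i⟫` over an orthonormal basis gives `finrank U`. -/
lemma lemA {n : ℕ} (U : Submodule ℝ (EuclideanSpace ℝ (Fin n))) {ι : Type*} [Fintype ι]
    (b : OrthonormalBasis ι ℝ (EuclideanSpace ℝ (Fin n))) :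
    ∑ i, (inner ℝ ((U.orthogonalProjectionOnto (b i) : EuclideanSpace ℝ (Fin n))) (b i) : ℝ)
      = Module.finrank ℝ U := by
  classical
  set w := stdOrthonormalBasis ℝ U with hw
  have hproj : ∀ x : EuclideanSpace ℝ (Fin n),
      (U.orthogonalProjectionOnto x : EuclideanSpace ℝ (Fin n))
        = ∑ j, (inner ℝ ((w j : EuclideanSpace ℝ (Fin n))) x : ℝ) • (w j : EuclideanSpace ℝ (Fin n)) := by
    intro x
    rw [w.orthogonalProjectionOnto_apply_eq_sum]
    push_cast
    simp
  calc ∑ i, (inner ℝ ((U.orthogonalProjectionOnto (b i) : EuclideanSpace ℝ (Fin n))) (b i) : ℝ)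
      = ∑ i, ∑ j, (inner ℝ ((w j : EuclideanSpace ℝ (Fin n))) (b i) : ℝ)
          * (inner ℝ ((w j : EuclideanSpace ℝ (Fin n))) (b i) : ℝ) := by
        refine Finset.sum_congr rfl fun i _ => ?_
        rw [hproj (b i), sum_inner]
        refine Finset.sum_congr rfl fun j _ => ?_
        rw [real_inner_smul_left]
    _ = ∑ j, ∑ i, (inner ℝ ((w j : EuclideanSpace ℝ (Fin n))) (b i) : ℝ)
          * (inner ℝ ((b i)) ((w j : EuclideanSpace ℝ (Fin n))) : ℝ) := by
        rw [Finset.sum_comm]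
        exact Finset.sum_congr rfl fun j _ => Finset.sum_congr rfl fun i _ => by
          rw [real_inner_comm (b i)]
    _ = ∑ j : Fin (Module.finrank ℝ U), (1 : ℝ) := by
        refine Finset.sum_congr rfl fun j _ => ?_
        rw [b.sum_inner_mul_inner]
        have := w.orthonormal.1 j
        rw [← Submodule.coe_inner, real_inner_self_eq_norm_sq, this]
        norm_num
    _ = Module.finrank ℝ U := by simp

lemma dot_eq_inner {n : ℕ} (u v : Fin n → ℝ) :
    u ⬝ᵥ v = (inner ℝ (toE u) (toE v) : ℝ) := by
  simp [PiLp.inner_apply, RCLike.inner_apply, dotProduct, toE, mul_comm]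

/-- Key inequality: if `x` is fixed by `Zᵀ`, `v` is a unit eigenvector of `ZᵀZ` with
eigenvalue `μ`, and `⟪x, v⟫ = ‖x‖²`, then `⟪x, v⟫ ≤ √μ`. -/
lemma keylem {n : ℕ} (Z : Matrix (Fin n) (Fin n) ℝ) (x v : Fin n → ℝ) (μ : ℝ)
    (hfix : Zᵀ *ᵥ x = x) (hZZ : (Zᵀ * Z) *ᵥ v = μ • v) (hv : v ⬝ᵥ v = 1)
    (hxx : x ⬝ᵥ v = x ⬝ᵥ x) :
    x ⬝ᵥ v ≤ Real.sqrt μ := by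
  set y : Fin n → ℝ := Z *ᵥ v with hy
  have hyy : y ⬝ᵥ y = μ := by
    have h1 : y ⬝ᵥ y = v ⬝ᵥ ((Zᵀ * Z) *ᵥ v) := by
      rw [← mulVec_mulVec, dotProduct_mulVec (v := v), vecMul_transpose, dotProduct_comm]
    rw [h1, hZZ, dotProduct_smul, smul_eq_mul, hv, mul_one]
  have hxy : x ⬝ᵥ v = x ⬝ᵥ y := by
    rw [hy, dotProduct_mulVec, ← mulVec_transpose, hfix]
  have hny : ‖toE y‖ = Real.sqrt μ := by
    have h2 : ‖toE y‖ ^ 2 = μ := by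
      rw [← real_inner_self_eq_norm_sq, ← dot_eq_inner, hyy]
    rw [← h2, Real.sqrt_sq (norm_nonneg _)]
  have hnx2 : ‖toE x‖ ^ 2 = x ⬝ᵥ x := by
    rw [← real_inner_self_eq_norm_sq, ← dot_eq_inner]
  have hnv : ‖toE v‖ = 1 := by
    have h2 : ‖toE v‖ ^ 2 = 1 := by
      rw [← real_inner_self_eq_norm_sq, ← dot_eq_inner, hv]
    nlinarith [norm_nonneg (toE v)]
  have hxle : ‖toE x‖ ≤ 1 := by
    have hcs := real_inner_le_norm (toE x) (toE v)
    rw [← dot_eq_inner, hnv, mul_one] at hcs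
    nlinarith [norm_nonneg (toE x)]
  have hcs2 := real_inner_le_norm (toE x) (toE y)
  rw [← dot_eq_inner, hny] at hcs2
  have hs : (0:ℝ) ≤ Real.sqrt μ := Real.sqrt_nonneg _
  calc x ⬝ᵥ v = x ⬝ᵥ y := hxy
    _ ≤ ‖toE x‖ * Real.sqrt μ := hcs2
    _ ≤ 1 * Real.sqrt μ := mul_le_mul_of_nonneg_right hxle hs
    _ = Real.sqrt μ := one_mul _

/-- If a subspace `U` is pointwise fixed by `Zᵀ`, then `finrank U ≤ ‖Z‖₊`. -/
lemma lemB {n : ℕ} (Z : Matrix (Fin n) (Fin n) ℝ) (U : Submodule ℝ (EuclideanSpace ℝ (Fin n)))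
    (hU : ∀ x ∈ U, Zᵀ *ᵥ x = x) :
    (Module.finrank ℝ U : ℝ) ≤ nuclearNorm Z := by
  classical
  set hZ := herm_tm Z with hhZ
  set b := hZ.eigenvectorBasis with hb
  rw [nuclearNorm, ← lemA U b]
  refine Finset.sum_le_sum fun i _ => ?_
  set xE : EuclideanSpace ℝ (Fin n) := (U.orthogonalProjectionOnto (b i) : EuclideanSpace ℝ (Fin n)) with hx
  have hxU : xE ∈ U := Submodule.coe_mem _
  have h1 : (inner ℝ xE (b i) : ℝ) = (inner ℝ xE xE : ℝ) := by
    have horth : (b i) - xE ∈ Uᗮ := Submodule.sub_starProjection_mem_orthogonal (b i)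
    have h0 : (inner ℝ xE ((b i) - xE) : ℝ) = 0 := (Submodule.mem_orthogonal U _).1 horth xE hxU
    rw [inner_sub_right] at h0; linarith
  have hnb : ‖b i‖ = 1 := b.orthonormal.1 i
  have goal_eq : (inner ℝ xE (b i) : ℝ) = xE ⬝ᵥ ⇑(b i) := (dot_eq_inner _ _).symm
  rw [goal_eq]
  apply keylem Z xE (⇑(b i)) (hZ.eigenvalues i)
  · exact hU xE hxU
  · exact hZ.mulVec_eigenvectorBasis i
  · rw [dot_eq_inner]
    have h2 : (inner ℝ (b i) (b i) : ℝ) = ‖b i‖ ^ 2 := real_inner_self_eq_norm_sq _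
    rw [hnb] at h2
    simpa [toE] using h2
  · rw [dot_eq_inner, dot_eq_inner]
    exact h1

lemma SIM_mulVec {m n : ℕ} (D : Matrix (Fin m) (Fin n) ℝ) (v : EuclideanSpace ℝ (Fin n)) :
    (SIM D) *ᵥ v = ((rowSpace D).orthogonalProjectionOnto v : EuclideanSpace ℝ (Fin n)) := by
  have h := Matrix.toLin'_toMatrix' (R := ℝ)
    ((WithLp.linearEquiv 2 ℝ (Fin n → ℝ)).toLinearMap ∘ₗ
      (((rowSpace D).subtypeL.comp (rowSpace D).orthogonalProjectionOnto).toLinearMap :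
        EuclideanSpace ℝ (Fin n) →ₗ[ℝ] EuclideanSpace ℝ (Fin n)) ∘ₗ
      (WithLp.linearEquiv 2 ℝ (Fin n → ℝ)).symm.toLinearMap :
      (Fin n → ℝ) →ₗ[ℝ] (Fin n → ℝ))
  calc (SIM D) *ᵥ v = Matrix.toLin' (SIM D) v := by rw [Matrix.toLin'_apply]
    _ = _ := by rw [SIM]; exact LinearMap.congr_fun h v.ofLp

lemma mulVec_single_eq {n : ℕ} (P : Matrix (Fin n) (Fin n) ℝ) (j k : Fin n) :
    (P *ᵥ toE (Pi.single j 1)) k = P k j := by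
  show (P *ᵥ Pi.single j 1) k = P k j
  simp [mulVec_single]

lemma row_mem_rowSpace {m n : ℕ} (D : Matrix (Fin m) (Fin n) ℝ) (i : Fin m) :
    toE (D i) ∈ rowSpace D :=
  Submodule.subset_span ⟨i, rfl⟩

lemma D_eq_D_mul_SIM {m n : ℕ} (D : Matrix (Fin m) (Fin n) ℝ) : D = D * SIM D := by
  ext i j
  rw [mul_apply]
  set U := rowSpace D with hU
  set q : EuclideanSpace ℝ (Fin n) := (U.orthogonalProjectionOnto (toE (Pi.single j 1)) : EuclideanSpace ℝ (Fin n)) with hq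
  have hcol : ∀ k, SIM D k j = q k := by
    intro k
    rw [← mulVec_single_eq (SIM D) j k, SIM_mulVec D (toE (Pi.single j 1))]
  have : ∑ k, D i k * SIM D k j = D i ⬝ᵥ q := by
    rw [dotProduct]
    exact Finset.sum_congr rfl fun k _ => by rw [hcol k]
  rw [this, dot_eq_inner]
  have hproj : (inner ℝ (toE (D i)) (toE q) : ℝ)
      = (inner ℝ ((U.orthogonalProjectionOnto (toE (D i)) : EuclideanSpace ℝ (Fin n))) (toE (Pi.single j 1)) : ℝ) := by
    have := Submodule.inner_starProjection_left_eq_right (K := U) (toE (D i)) (toE (Pi.single j 1))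
    exact this.symm
  rw [hproj]
  have hfix : (U.orthogonalProjectionOnto (toE (D i)) : EuclideanSpace ℝ (Fin n)) = toE (D i) :=
    Submodule.starProjection_eq_self_iff.2 (row_mem_rowSpace D i)
  rw [hfix, ← dot_eq_inner]
  simp [dotProduct, Pi.single_apply, toE]

lemma euclid_apply_eq_inner {n : ℕ} (x : EuclideanSpace ℝ (Fin n)) (a : Fin n) :
    x a = (inner ℝ x (toE (Pi.single a 1)) : ℝ) := by
  simp [PiLp.inner_apply, RCLike.inner_apply, Pi.single_apply, toE]

lemma SIM_apply_eq {m n : ℕ} (D : Matrix (Fin m) (Fin n) ℝ) (a c : Fin n) :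
    SIM D a c = (inner ℝ (((rowSpace D).orthogonalProjectionOnto (toE (Pi.single c 1))
        : EuclideanSpace ℝ (Fin n))) (toE (Pi.single a 1)) : ℝ) := by
  rw [← mulVec_single_eq (SIM D) c a, SIM_mulVec D (toE (Pi.single c 1))]
  exact euclid_apply_eq_inner _ a

lemma SIM_symm {m n : ℕ} (D : Matrix (Fin m) (Fin n) ℝ) : (SIM D)ᵀ = SIM D := by
  ext k j
  rw [transpose_apply, SIM_apply_eq D j k, SIM_apply_eq D k j]
  simp only [Submodule.coe_orthogonalProjectionOnto_apply]
  rw [Submodule.inner_starProjection_left_eq_right, real_inner_comm]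

lemma SIM_idem {m n : ℕ} (D : Matrix (Fin m) (Fin n) ℝ) : SIM D * SIM D = SIM D := by
  have h : ∀ v : EuclideanSpace ℝ (Fin n), (SIM D * SIM D) *ᵥ v = (SIM D) *ᵥ v := by
    intro v
    rw [← mulVec_mulVec, SIM_mulVec, SIM_mulVec]
    exact congrArg (fun x : rowSpace D => (x : EuclideanSpace ℝ (Fin n)).ofLp) (Submodule.orthogonalProjectionOnto_mem_subspace_eq_self ((rowSpace D).orthogonalProjectionOnto v))
  ext a c
  rw [← mulVec_single_eq (SIM D * SIM D) c a, ← mulVec_single_eq (SIM D) c a, h]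

lemma eig_congr {n : Type*} [Fintype n] [DecidableEq n] {A B : Matrix n n ℝ} (h : A = B)
    (hA : A.IsHermitian) (hB : B.IsHermitian) : hA.eigenvalues = hB.eigenvalues := by
  subst h; rfl

lemma rank_eq_finrank_rowSpace {m n : ℕ} (D : Matrix (Fin m) (Fin n) ℝ) :
    (D.rank : ℕ) = Module.finrank ℝ (rowSpace D) := by
  rw [D.rank_eq_finrank_span_row,
    ← LinearEquiv.finrank_map_eq (WithLp.linearEquiv 2 ℝ (Fin n → ℝ)).symm,
    Submodule.map_span, ← Set.range_comp]
  rfl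

lemma nuclearNorm_SIM {m n : ℕ} (D : Matrix (Fin m) (Fin n) ℝ) :
    nuclearNorm (SIM D) = (D.rank : ℝ) := by
  classical
  have hPtP : (SIM D)ᵀ * SIM D = SIM D := by rw [SIM_symm, SIM_idem]
  have hP : (SIM D).IsHermitian := hPtP ▸ herm_tm (SIM D)
  have h1 : nuclearNorm (SIM D) = ∑ i, Real.sqrt (hP.eigenvalues i) := by
    rw [nuclearNorm, eig_congr hPtP (herm_tm (SIM D)) hP]
  set b := hP.eigenvectorBasis with hb
  have hvec : ∀ i, SIM D *ᵥ ⇑(b i) = hP.eigenvalues i • ⇑(b i) := hP.mulVec_eigenvectorBasis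
  have hmu : ∀ i, hP.eigenvalues i * (hP.eigenvalues i - 1) = 0 := by
    intro i
    have h2 : SIM D *ᵥ (SIM D *ᵥ ⇑(b i)) = SIM D *ᵥ ⇑(b i) := by
      rw [mulVec_mulVec, SIM_idem]
    rw [hvec i, mulVec_smul, hvec i, smul_smul] at h2
    have h3 : (hP.eigenvalues i * hP.eigenvalues i - hP.eigenvalues i) • ⇑(b i) = 0 := by
      rw [sub_smul, h2, sub_self]
    have hbne : ⇑(b i) ≠ 0 := by
      intro h0
      exact b.orthonormal.ne_zero i (by ext k; exact congrFun h0 k)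
    rcases smul_eq_zero.1 h3 with h | h
    · nlinarith [h]
    · exact absurd h hbne
  have hsqrt : ∀ i, Real.sqrt (hP.eigenvalues i) = hP.eigenvalues i := by
    intro i
    rcases mul_eq_zero.1 (hmu i) with h | h
    · rw [h, Real.sqrt_zero]
    · have : hP.eigenvalues i = 1 := by linarith
      rw [this, Real.sqrt_one]
  have hsum : ∑ i, hP.eigenvalues i
      = ∑ i, (inner ℝ (((rowSpace D).orthogonalProjectionOnto (b i) : EuclideanSpace ℝ (Fin n))) (b i) : ℝ) := by
    refine Finset.sum_congr rfl fun i _ => ?_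
    have hproj : ((rowSpace D).orthogonalProjectionOnto (b i) : EuclideanSpace ℝ (Fin n))
        = hP.eigenvalues i • (b i) := by
      apply WithLp.ofLp_injective 2
      rw [← SIM_mulVec D (b i)]
      exact hvec i
    rw [hproj, real_inner_smul_left, real_inner_self_eq_norm_sq, b.orthonormal.1 i]
    norm_num
  rw [h1]
  simp_rw [hsqrt]
  rw [hsum, lemA (rowSpace D) b, ← rank_eq_finrank_rowSpace]

lemma rowSpace_fixed {m n : ℕ} {D : Matrix (Fin m) (Fin n) ℝ} {Z : Matrix (Fin n) (Fin n) ℝ}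
    (hDZ : D = D * Z) : ∀ x ∈ rowSpace D, Zᵀ *ᵥ x = x := by
  intro x hx
  have hrow : ∀ i, Zᵀ *ᵥ (D i) = D i := by
    intro i
    ext j
    have h := congrFun (congrFun hDZ i) j
    rw [mul_apply] at h
    simp only [mulVec, dotProduct, transpose_apply]
    rw [h]
    exact Finset.sum_congr rfl fun k _ => mul_comm _ _
  induction hx using Submodule.span_induction with
  | mem y h => obtain ⟨i, rfl⟩ := h; exact hrow i
  | zero => exact mulVec_zero _
  | add y z _ _ hy hz => rw [WithLp.ofLp_add, mulVec_add, hy, hz]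
  | smul a y _ hy => rw [WithLp.ofLp_smul, mulVec_smul, hy]

lemma nuclearNorm_nonneg {m n : Type*} [Fintype m] [Fintype n] [DecidableEq n]
    (A : Matrix m n ℝ) : 0 ≤ nuclearNorm A :=
  Finset.sum_nonneg fun _ _ => Real.sqrt_nonneg _

lemma norm21_nonneg {m n : Type*} [Fintype m] [Fintype n] (E : Matrix m n ℝ) : 0 ≤ norm21 E :=
  Finset.sum_nonneg fun _ _ => Real.sqrt_nonneg _

/-- For a real `m × n` matrix `X` and `λ > 0`, the infimum of `‖Z‖₊ + λ * ‖E‖₂,₁` over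
all triples `(Z, D, E)` with `D = D * Z` and `X = D + E` equals the infimum of
`rank D + λ * ‖E‖₂,₁` over all pairs `(D, E)` with `X = D + E`; moreover, for any
feasible `(D, E)` of the second problem, the triple `(SIM D, D, E)` is feasible for
the first and achieves the objective value `rank D + λ * ‖E‖₂,₁`. -/
theorem lrr_clean_dictionary_equiv_csrpca {m n : ℕ} (X : Matrix (Fin m) (Fin n) ℝ)
    (lam : ℝ) (hlam : 0 < lam) :
    sInf {v : ℝ | ∃ (Z : Matrix (Fin n) (Fin n) ℝ) (D E : Matrix (Fin m) (Fin n) ℝ),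
        D = D * Z ∧ X = D + E ∧ v = nuclearNorm Z + lam * norm21 E}
      = sInf {v : ℝ | ∃ D E : Matrix (Fin m) (Fin n) ℝ,
        X = D + E ∧ v = (D.rank : ℝ) + lam * norm21 E} ∧
    ∀ D E : Matrix (Fin m) (Fin n) ℝ, X = D + E →
      D = D * SIM D ∧
      nuclearNorm (SIM D) + lam * norm21 E = (D.rank : ℝ) + lam * norm21 E := by
  set S1 := {v : ℝ | ∃ (Z : Matrix (Fin n) (Fin n) ℝ) (D E : Matrix (Fin m) (Fin n) ℝ),
      D = D * Z ∧ X = D + E ∧ v = nuclearNorm Z + lam * norm21 E} with hS1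
  set S2 := {v : ℝ | ∃ D E : Matrix (Fin m) (Fin n) ℝ,
      X = D + E ∧ v = (D.rank : ℝ) + lam * norm21 E} with hS2
  have hsub : S2 ⊆ S1 := by
    rintro v ⟨D, E, hXE, rfl⟩
    exact ⟨SIM D, D, E, D_eq_D_mul_SIM D, hXE, by rw [nuclearNorm_SIM]⟩
  have hne2 : S2.Nonempty := ⟨(X.rank : ℝ) + lam * norm21 0, X, 0, by rw [add_zero], rfl⟩
  have hne1 : S1.Nonempty := hne2.mono hsub
  have hlb1 : ∀ v ∈ S1, (0:ℝ) ≤ v := by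
    rintro v ⟨Z, D, E, _, _, rfl⟩
    have := nuclearNorm_nonneg Z
    have := norm21_nonneg E
    nlinarith
  have hlb2 : ∀ v ∈ S2, (0:ℝ) ≤ v := by
    rintro v ⟨D, E, _, rfl⟩
    have h1 : (0:ℝ) ≤ (D.rank : ℝ) := Nat.cast_nonneg _
    nlinarith [norm21_nonneg E]
  constructor
  · apply le_antisymm
    · exact csInf_le_csInf ⟨0, hlb1⟩ hne2 hsub
    · refine le_csInf hne1 ?_
      rintro v ⟨Z, D, E, hDZ, hXE, rfl⟩
      refine csInf_le_of_le ⟨0, hlb2⟩ ⟨D, E, hXE, rfl⟩ ?_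
      have h1 : ((D.rank : ℕ) : ℝ) ≤ nuclearNorm Z := by
        rw [rank_eq_finrank_rowSpace]
        exact lemB Z (rowSpace D) (rowSpace_fixed hDZ)
      linarith
  · intro D E hXE
    exact ⟨D_eq_D_mul_SIM D, by rw [nuclearNorm_SIM]⟩
end
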